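/- Let V be a finite-dimensional real vector space, Λ a lattice in V, and let P and Q be integers greater than 1 that are multiplicatively independent. Let f : V → ℝ be a discretely supported function such that f_P(x) = f(Px) − f(x) and f_Q(x) = f(Qx) − f(x) are both Λ-periodic. Then there exists a lattice Λ' ⊆ Λ (depending on f) such that for every z ∉ ℚΛ and every λ ∈ Λ', f(z + λ) = f(z). If moreover gcd(P, Q) = 1, then one may take Λ' = Λ. -/

import Mathlib

open Filter Function

/-- `Λ` is a lattice in the finite-dimensional real vector space `V`:
it is the `ℤ`-span of an `ℝ`-basis of `V`. -/
def IsLattice (V : Type*) [NormedAddCommGroup V] [NormedSpace ℝ V]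
    [FiniteDimensional ℝ V] (Λ : Set V) : Prop :=
  ∃ b : Module.Basis (Fin (Module.finrank ℝ V)) ℝ V,
    Λ = (Submodule.span ℤ (Set.range b) : Submodule ℤ V)

/-- `f` is discretely supported: its support has no accumulation points in `V`. -/
def DiscretelySupported {V : Type*} [NormedAddCommGroup V] {α : Type*} [Zero α]
    (f : V → α) : Prop :=
  ∀ x : V, ¬ AccPt x (𝓟 (Function.support f))

/-- `f` is `Λ`-periodic. -/
def IsPeriodic {V : Type*} [AddCommGroup V] {α : Type*} (Λ : Set V) (f : V → α) : Prop :=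
  ∀ x : V, ∀ l ∈ Λ, f (x + l) = f x

/-- `P` and `Q` are multiplicatively independent: `P ^ a = Q ^ b` with integer exponents
`a, b` implies `a = b = 0`. -/
def MultIndep (P Q : ℤ) : Prop :=
  ∀ a b : ℤ, (P : ℚ) ^ a = (Q : ℚ) ^ b → a = 0 ∧ b = 0

/-- `ℚΛ`: the `ℚ`-span of `Λ` in `V`, i.e. the set of finite `ℚ`-linear combinations of
elements of `Λ`. -/
def ratSpan {V : Type*} [AddCommGroup V] [Module ℝ V] (Λ : Set V) : Set V :=
  {v : V | ∃ (n : ℕ) (c : Fin n → ℚ) (l : Fin n → V),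
    (∀ i, l i ∈ Λ) ∧ v = ∑ i, (c i : ℝ) • l i}

section Aux

variable {V : Type*} [NormedAddCommGroup V] [NormedSpace ℝ V]

/-- Elements whose positive-integer multiple lies in `L` (a stand-in for the `ℚ`-span). -/
def Wq (L : Submodule ℤ V) : Set V := {v | ∃ n : ℕ, 0 < n ∧ (n : ℝ) • v ∈ L}

theorem Wq_zero (L : Submodule ℤ V) : (0 : V) ∈ Wq L := ⟨1, one_pos, by simp⟩

theorem Wq_of_mem {L : Submodule ℤ V} {l : V} (hl : l ∈ L) : l ∈ Wq L :=
  ⟨1, one_pos, by simpa using hl⟩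

theorem Wq_add {L : Submodule ℤ V} {v w : V} (hv : v ∈ Wq L) (hw : w ∈ Wq L) :
    v + w ∈ Wq L := by
  obtain ⟨n, hn, hnv⟩ := hv
  obtain ⟨m, hm, hmw⟩ := hw
  refine ⟨n * m, Nat.mul_pos hn hm, ?_⟩
  have h : ((n * m : ℕ) : ℝ) • (v + w)
      = ((m : ℤ) : ℝ) • ((n : ℝ) • v) + ((n : ℤ) : ℝ) • ((m : ℝ) • w) := by
    push_cast
    module
  rw [h, Int.cast_smul_eq_zsmul, Int.cast_smul_eq_zsmul]
  exact L.add_mem (L.smul_mem _ hnv) (L.smul_mem _ hmw)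

theorem Wq_zsmul {L : Submodule ℤ V} {v : V} (k : ℤ) (hv : v ∈ Wq L) :
    ((k : ℝ)) • v ∈ Wq L := by
  obtain ⟨n, hn, hnv⟩ := hv
  refine ⟨n, hn, ?_⟩
  have h : (n : ℝ) • ((k : ℝ) • v) = ((k : ℤ) : ℝ) • ((n : ℝ) • v) := by
    push_cast; module
  rw [h, Int.cast_smul_eq_zsmul]
  exact L.smul_mem _ hnv

theorem Wq_neg {L : Submodule ℤ V} {v : V} (hv : v ∈ Wq L) : -v ∈ Wq L := by
  have := Wq_zsmul (-1) hv
  simpa using this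

theorem Wq_cancel {L : Submodule ℤ V} {v : V} {k : ℤ} (hk : k ≠ 0)
    (h : ((k : ℝ)) • v ∈ Wq L) : v ∈ Wq L := by
  obtain ⟨n, hn, hnv⟩ := h
  have h2 : (((n : ℤ) * k : ℤ) : ℝ) • v ∈ L := by
    have e : (((n : ℤ) * k : ℤ) : ℝ) • v = (n : ℝ) • ((k : ℝ) • v) := by push_cast; module
    rw [e]; exact hnv
  refine ⟨n * k.natAbs, Nat.mul_pos hn (Int.natAbs_pos.mpr hk), ?_⟩
  have e0 : ((n * k.natAbs : ℕ) : ℝ) = (((n : ℤ) * (k.natAbs : ℤ) : ℤ) : ℝ) := by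
    push_cast [Nat.cast_natAbs]; ring
  rcases Int.natAbs_eq k with hk1 | hk1
  · have hk2 : ((k.natAbs : ℤ)) = k := hk1.symm
    rw [hk2] at e0
    rw [e0]; exact h2
  · have hk2 : ((k.natAbs : ℤ)) = -k := by omega
    rw [hk2] at e0
    rw [e0]
    have e2 : (((n : ℤ) * -k : ℤ) : ℝ) • v = -((((n : ℤ) * k : ℤ) : ℝ) • v) := by
      push_cast; module
    rw [e2]; exact L.neg_mem h2

theorem Wq_rpow_smul {L : Submodule ℤ V} {v : V} (a : ℤ) (i : ℕ) (hv : v ∈ Wq L) :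
    ((a : ℝ) ^ i) • v ∈ Wq L := by
  have := Wq_zsmul (a ^ i) hv
  rwa [show (((a ^ i : ℤ)) : ℝ) = (a : ℝ) ^ i by push_cast; ring] at this

theorem L_rpow_smul {L : Submodule ℤ V} (a : ℤ) (i : ℕ) {l : V} (hl : l ∈ L) :
    ((a : ℝ) ^ i) • l ∈ L := by
  rw [show ((a : ℝ) ^ i) = (((a ^ i : ℤ)) : ℝ) by push_cast; ring, Int.cast_smul_eq_zsmul]
  exact L.smul_mem _ hl

theorem discrete_finite [FiniteDimensional ℝ V] {S : Set V}
    (hS : ∀ x, ¬ AccPt x (𝓟 S)) (r : ℝ) : (S ∩ Metric.closedBall 0 r).Finite := by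
  by_contra hinf
  have h1 : (S ∩ Metric.closedBall 0 r).Infinite := hinf
  obtain ⟨x, -, hx⟩ := h1.exists_accPt_of_subset_isCompact
    (isCompact_closedBall (0 : V) r) Set.inter_subset_right
  exact hS x (hx.mono (principal_mono.mpr Set.inter_subset_left))

theorem reduce_mod [FiniteDimensional ℝ V]
    (b : Module.Basis (Fin (Module.finrank ℝ V)) ℝ V) (y : V) :
    ∃ s : V, ‖s‖ ≤ ∑ i, ‖b i‖ ∧ y - s ∈ Submodule.span ℤ (Set.range ⇑b) := by
  refine ⟨∑ i, Int.fract (b.repr y i) • b i, ?_, ?_⟩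
  · calc ‖∑ i, Int.fract (b.repr y i) • b i‖ ≤ ∑ i, ‖Int.fract (b.repr y i) • b i‖ :=
        norm_sum_le _ _
    _ ≤ ∑ i, ‖b i‖ := by
        refine Finset.sum_le_sum fun i _ => ?_
        rw [norm_smul, Real.norm_eq_abs, abs_of_nonneg (Int.fract_nonneg _)]
        nlinarith [norm_nonneg (b i), Int.fract_nonneg (b.repr y i),
          (Int.fract_lt_one (b.repr y i)).le]
  · set t : Fin (Module.finrank ℝ V) → ℝ := fun i => b.repr y i with ht
    have hy : y = ∑ i, (t i) • b i := (b.sum_repr y).symm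
    have h : y - ∑ i, Int.fract (t i) • b i = ∑ i, ((⌊t i⌋ : ℤ) : ℝ) • b i := by
      conv_lhs => rw [hy]
      rw [← Finset.sum_sub_distrib]
      refine Finset.sum_congr rfl fun i _ => ?_
      rw [← sub_smul, Int.self_sub_fract]
    rw [h]
    exact Submodule.sum_mem _ fun i _ => by
      rw [Int.cast_smul_eq_zsmul]
      exact Submodule.smul_mem _ _ (Submodule.subset_span ⟨i, rfl⟩)

end Aux

section Aux2

open Filter Function Topology

variable {V : Type*} [NormedAddCommGroup V] [NormedSpace ℝ V]

theorem scalar_step {c : ℝ} (hc : c ≠ 0) (m : ℕ) (x : V) :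
    c • ((c ^ (m + 1))⁻¹ • x) = (c ^ m)⁻¹ • x := by
  rw [smul_smul]
  congr 1
  rw [pow_succ, mul_inv, ← mul_assoc]
  field_simp

theorem iterate_id {Λ : Set V} {f : V → ℝ} {c : ℝ} (hc : c ≠ 0)
    (hstep : IsPeriodic Λ (fun x => f (c • x) - f x))
    (hcl : ∀ l ∈ Λ, c • l ∈ Λ) :
    ∀ (m : ℕ) (x : V), ∀ μ ∈ Λ,
      f (x + c ^ m • μ) - f x = f ((c ^ m)⁻¹ • x + μ) - f ((c ^ m)⁻¹ • x) := by
  intro m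
  induction m with
  | zero => intro x μ hμ; simp
  | succ m ih =>
    intro x μ hμ
    have h1 := ih x (c • μ) (hcl μ hμ)
    rw [show c ^ m • (c • μ) = c ^ (m + 1) • μ by rw [smul_smul, ← pow_succ]] at h1
    have h2 := hstep ((c ^ (m + 1))⁻¹ • x) μ hμ
    simp only [smul_add] at h2
    rw [scalar_step hc m x] at h2
    linarith [h1, h2]

theorem exists_level {f : V → ℝ} (hf : DiscretelySupported f) {c : ℝ} (hc : 1 < c)
    {x : V} (hx : x ≠ 0) (hfx : f x ≠ 0) :
    ∃ i : ℕ, 1 ≤ i ∧ f (c • ((c ^ i)⁻¹ • x)) - f ((c ^ i)⁻¹ • x) ≠ 0 := by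
  have hc0 : c ≠ 0 := (lt_trans zero_lt_one hc).ne'
  by_contra hcon
  push_neg at hcon
  have key : ∀ n : ℕ, f ((c ^ n)⁻¹ • x) = f x := by
    intro n
    induction n with
    | zero => simp
    | succ n ih =>
      have h := hcon (n + 1) (Nat.succ_le_succ n.zero_le)
      rw [scalar_step hc0 n x] at h
      rw [← ih]; linarith
  obtain ⟨U, hU, hU0⟩ : ∃ U ∈ 𝓝 (0 : V), ∀ y ∈ U ∩ Function.support f, y = 0 := by
    have h0 := hf 0
    rw [accPt_iff_nhds] at h0
    push_neg at h0
    obtain ⟨U, hU, h⟩ := h0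
    exact ⟨U, hU, fun y hy => h y hy⟩
  obtain ⟨ε, hε, hball⟩ := Metric.mem_nhds_iff.mp hU
  obtain ⟨n, hn⟩ := pow_unbounded_of_one_lt (‖x‖ / ε) hc
  have hcn : (0 : ℝ) < c ^ n := pow_pos (lt_trans zero_lt_one hc) n
  have hmem : (c ^ n)⁻¹ • x ∈ Metric.ball (0 : V) ε := by
    rw [Metric.mem_ball, dist_zero_right, norm_smul, Real.norm_eq_abs, abs_inv,
      abs_of_pos hcn]
    rw [div_lt_iff₀ hε] at hn
    rw [inv_mul_lt_iff₀ hcn]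
    nlinarith
  have h0 : (c ^ n)⁻¹ • x = 0 :=
    hU0 _ ⟨hball hmem, by rw [Function.mem_support, key n]; exact hfx⟩
  exact hx ((smul_eq_zero.mp h0).resolve_left (inv_ne_zero (pow_ne_zero n hc0)))

theorem Wq_subset_ratSpan {Λ : Set V} {L : Submodule ℤ V} (hΛ : Λ = (L : Set V)) :
    Wq L ⊆ ratSpan Λ := by
  rintro v ⟨n, hn, hv⟩
  refine ⟨1, fun _ => ((n : ℚ))⁻¹, fun _ => (n : ℝ) • v, fun i => by rw [hΛ]; exact hv, ?_⟩
  rw [Fin.sum_univ_one]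
  rw [smul_smul]
  have hn0 : ((n : ℚ) : ℝ) ≠ 0 := by
    simp only [Rat.cast_natCast]
    exact_mod_cast hn.ne'
  rw [Rat.cast_inv, Rat.cast_natCast]
  rw [inv_mul_cancel₀ (by exact_mod_cast hn.ne' : ((n : ℝ)) ≠ 0), one_smul]

theorem lattice_int_smul {Λ : Set V} {L : Submodule ℤ V} (hΛ : Λ = (L : Set V))
    (a : ℤ) (i : ℕ) {l : V} (hl : l ∈ Λ) : ((a : ℝ) ^ i) • l ∈ Λ := by
  rw [hΛ] at hl ⊢
  exact L_rpow_smul a i hl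

end Aux2

section MainLemma

open Filter Function Metric Submodule Set

variable {V : Type*} [NormedAddCommGroup V] [NormedSpace ℝ V] [FiniteDimensional ℝ V]

theorem main_period
    (Λ : Set V) (b : Module.Basis (Fin (Module.finrank ℝ V)) ℝ V)
    (hΛ : Λ = ((Submodule.span ℤ (Set.range ⇑b) : Submodule ℤ V) : Set V))
    (P Q : ℤ) (hP : 1 < P) (hQ : 1 < Q) (hPQ : MultIndep P Q)
    (f : V → ℝ) (hf : DiscretelySupported f)
    (hfP : IsPeriodic Λ (fun x => f ((P : ℝ) • x) - f x))
    (hfQ : IsPeriodic Λ (fun x => f ((Q : ℝ) • x) - f x)) :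
    ∃ M : ℕ, ∀ z ∉ Wq (Submodule.span ℤ (Set.range ⇑b)), ∀ l' ∈ Λ, ∀ μ ∈ Λ,
      f (z + l' + ((Q : ℝ) ^ M) • μ) = f (z + l') := by
  set L : Submodule ℤ V := Submodule.span ℤ (Set.range ⇑b) with hL
  have hmem : ∀ v : V, v ∈ Λ ↔ v ∈ L := fun v => by rw [hΛ]; exact Iff.rfl
  have hPr1 : (1 : ℝ) < (P : ℝ) := by exact_mod_cast hP
  have hQr1 : (1 : ℝ) < (Q : ℝ) := by exact_mod_cast hQ
  have hPr0 : (P : ℝ) ≠ 0 := (lt_trans zero_lt_one hPr1).ne'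
  have hQr0 : (Q : ℝ) ≠ 0 := (lt_trans zero_lt_one hQr1).ne'
  set g : V → ℝ := fun y => f ((P : ℝ) • y) - f y with hg
  have hgper : ∀ y : V, ∀ l ∈ L, g (y + l) = g y := fun y l hl => hfP y l ((hmem l).mpr hl)
  set R : ℝ := ∑ i, ‖b i‖ with hR
  have hfin : (support g ∩ Metric.closedBall (0 : V) R).Finite := by
    have h1 := discrete_finite hf R
    have h2 := discrete_finite hf ((P : ℝ) * R)
    refine (h1.union (h2.image (fun v => ((P : ℝ))⁻¹ • v))).subset ?_
    rintro y ⟨hy, hyb⟩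
    by_cases hfy : f y = 0
    · have hfPy : f ((P : ℝ) • y) ≠ 0 := by
        intro h
        rw [Function.mem_support] at hy
        exact hy (by simp only [hg]; rw [h, hfy, sub_zero])
      refine Or.inr ⟨(P : ℝ) • y, ⟨hfPy, ?_⟩,
        by show ((P : ℝ))⁻¹ • ((P : ℝ) • y) = y; rw [inv_smul_smul₀ hPr0]⟩
      rw [Metric.mem_closedBall, dist_zero_right] at hyb ⊢
      rw [norm_smul, Real.norm_eq_abs, abs_of_pos (lt_trans zero_lt_one hPr1)]
      have := norm_nonneg y
      nlinarith
    · exact Or.inl ⟨hfy, hyb⟩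
  set S₀ : Set V := support g ∩ Metric.closedBall (0 : V) R with hS₀
  have hTfin : (S₀ \ Wq L).Finite := hfin.subset Set.diff_subset
  set K := hTfin.toFinset.card with hK
  refine ⟨K, ?_⟩
  intro z hz l' hl' μ hμ
  -- find a good exponent m ≤ K
  have good : ∃ m : ℕ, m ≤ K ∧
      ¬(∃ i : ℕ, 1 ≤ i ∧ ∃ s ∈ S₀ \ Wq L, z - ((P : ℝ) ^ i * (Q : ℝ) ^ m) • s ∈ Wq L) := by
    by_contra hbad
    push_neg at hbad
    have hbad' : ∀ m : Fin (K + 1), ∃ p : ℕ × V, 1 ≤ p.1 ∧ p.2 ∈ S₀ \ Wq L ∧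
        z - ((P : ℝ) ^ p.1 * (Q : ℝ) ^ (m : ℕ)) • p.2 ∈ Wq L := by
      intro m
      obtain ⟨i, hi, s, hs, hw⟩ := hbad m (Nat.lt_succ_iff.mp m.isLt)
      exact ⟨(i, s), hi, hs, hw⟩
    choose p hp1 hp2 hp3 using hbad'
    have hcard : hTfin.toFinset.card < (Finset.univ : Finset (Fin (K + 1))).card := by
      simp [hK]
    obtain ⟨m₁, -, m₂, -, hne, heqs⟩ :=
      Finset.exists_ne_map_eq_of_card_lt_of_maps_to hcard
        (fun m _ => hTfin.mem_toFinset.mpr (hp2 m))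
    have h1 := hp3 m₁
    have h2 := hp3 m₂
    rw [show (p m₂).2 = (p m₁).2 from heqs.symm] at h2
    set s : V := (p m₁).2 with hs
    set i₁ : ℕ := (p m₁).1
    set i₂ : ℕ := (p m₂).1
    have hdiff : (((P ^ i₂ * Q ^ (m₂ : ℕ) - P ^ i₁ * Q ^ (m₁ : ℕ) : ℤ)) : ℝ) • s ∈ Wq L := by
      have h3 := Wq_add h2 (Wq_neg h1)
      have e : (z - ((P : ℝ) ^ i₂ * (Q : ℝ) ^ (m₂ : ℕ)) • s)
            + -(z - ((P : ℝ) ^ i₁ * (Q : ℝ) ^ (m₁ : ℕ)) • s)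
          = (((P ^ i₁ * Q ^ (m₁ : ℕ) - P ^ i₂ * Q ^ (m₂ : ℕ) : ℤ)) : ℝ) • s := by
        push_cast; module
      rw [e] at h3
      have := Wq_neg h3
      rwa [show -((((P ^ i₁ * Q ^ (m₁ : ℕ) - P ^ i₂ * Q ^ (m₂ : ℕ) : ℤ)) : ℝ) • s)
          = (((P ^ i₂ * Q ^ (m₂ : ℕ) - P ^ i₁ * Q ^ (m₁ : ℕ) : ℤ)) : ℝ) • s by
        push_cast; module] at this
    rcases eq_or_ne (P ^ i₂ * Q ^ (m₂ : ℕ)) (P ^ i₁ * Q ^ (m₁ : ℕ)) with heq | hne2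
    · -- multiplicative independence forces m₁ = m₂
      have hPq0 : (P : ℚ) ≠ 0 := by
        intro h; rw [Int.cast_eq_zero] at h; omega
      have hQq0 : (Q : ℚ) ≠ 0 := by
        intro h; rw [Int.cast_eq_zero] at h; omega
      have hq : (P : ℚ) ^ i₂ * (Q : ℚ) ^ (m₂ : ℕ) = (P : ℚ) ^ i₁ * (Q : ℚ) ^ (m₁ : ℕ) := by
        exact_mod_cast congrArg (Int.cast : ℤ → ℚ) heq
      have hzp : (P : ℚ) ^ ((i₂ : ℤ) - (i₁ : ℤ)) = (Q : ℚ) ^ (((m₁ : ℕ) : ℤ) - ((m₂ : ℕ) : ℤ)) := by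
        rw [zpow_sub₀ hPq0, zpow_sub₀ hQq0, div_eq_div_iff (by positivity) (by positivity)]
        rw [zpow_natCast, zpow_natCast, zpow_natCast, zpow_natCast]
        linarith [hq]
      obtain ⟨-, hm0⟩ := hPQ _ _ hzp
      exact hne (Fin.ext (by omega))
    · exact (hp2 m₁).2 (Wq_cancel (sub_ne_zero.mpr hne2) hdiff)
  obtain ⟨m, hmK, hgood⟩ := good
  have hcm0 : ((Q : ℝ) ^ m) ≠ 0 := pow_ne_zero _ hQr0
  set y₁ : V := ((Q : ℝ) ^ m)⁻¹ • (z + l') with hy₁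
  have hz₁ : z + l' = ((Q : ℝ) ^ m) • y₁ := (smul_inv_smul₀ hcm0 _).symm
  have hzl'W : z + l' ∉ Wq L := by
    intro h
    apply hz
    have h2 := Wq_add h (Wq_neg (Wq_of_mem ((hmem l').mp hl')))
    simpa using h2
  -- key vanishing claim on the relevant coset
  have key : ∀ ν, ν ∈ L → f (y₁ + ν) = 0 := by
    intro ν hν
    by_contra hne0
    have hxW : y₁ + ν ∉ Wq L := by
      intro hW
      apply hzl'W
      have h1 : y₁ ∈ Wq L := by
        have h2 := Wq_add hW (Wq_neg (Wq_of_mem hν))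
        simpa using h2
      have h3 := Wq_rpow_smul Q m h1
      rwa [← hz₁] at h3
    have hx0 : y₁ + ν ≠ 0 := fun h => hxW (h ▸ Wq_zero L)
    obtain ⟨i, hi1, hgne⟩ := exists_level hf hPr1 hx0 hne0
    obtain ⟨s, hsnorm, hsdiff⟩ := reduce_mod b (((P : ℝ) ^ i)⁻¹ • (y₁ + ν))
    set lam : V := (((P : ℝ) ^ i)⁻¹ • (y₁ + ν)) - s with hlam
    have hpi0 : ((P : ℝ) ^ i) ≠ 0 := pow_ne_zero _ hPr0
    have e : s + lam = ((P : ℝ) ^ i)⁻¹ • (y₁ + ν) := by rw [hlam]; abel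
    have hgs : g s ≠ 0 := by
      have h4 : g (s + lam) = g s := hgper s lam hsdiff
      rw [e] at h4
      rw [← h4]
      exact hgne
    have hsS₀ : s ∈ S₀ := by
      refine ⟨Function.mem_support.mpr hgs, ?_⟩
      rw [Metric.mem_closedBall, dist_zero_right]
      exact hsnorm
    have hsW : s ∉ Wq L := by
      intro hsw
      apply hxW
      have h1 : s + lam ∈ Wq L := Wq_add hsw (Wq_of_mem hsdiff)
      have h2 := Wq_rpow_smul P i h1
      rw [e] at h2
      rwa [smul_inv_smul₀ hpi0] at h2
    refine hgood ⟨i, hi1, s, ⟨hsS₀, hsW⟩, ?_⟩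
    have hx3 : y₁ + ν = ((P : ℝ) ^ i) • s + ((P : ℝ) ^ i) • lam := by
      rw [← smul_add, e, smul_inv_smul₀ hpi0]
    have hzeq : z - ((P : ℝ) ^ i * (Q : ℝ) ^ m) • s
        = ((Q : ℝ) ^ m) • (((P : ℝ) ^ i) • lam) - ((Q : ℝ) ^ m) • ν - l' := by
      have hy₁e : y₁ = ((P : ℝ) ^ i) • s + ((P : ℝ) ^ i) • lam - ν := by
        rw [← hx3]; abel
      have hze : z = ((Q : ℝ) ^ m) • y₁ - l' := by
        rw [← hz₁]; abel
      rw [hze, hy₁e]; module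
    rw [hzeq]
    have w1 : ((Q : ℝ) ^ m) • (((P : ℝ) ^ i) • lam) ∈ Wq L :=
      Wq_rpow_smul Q m (Wq_rpow_smul P i (Wq_of_mem hsdiff))
    have w2 : ((Q : ℝ) ^ m) • ν ∈ Wq L := Wq_rpow_smul Q m (Wq_of_mem hν)
    have w3 : l' ∈ Wq L := Wq_of_mem ((hmem l').mp hl')
    have h5 := Wq_add (Wq_add w1 (Wq_neg w2)) (Wq_neg w3)
    rwa [show ((Q : ℝ) ^ m) • (((P : ℝ) ^ i) • lam) + -(((Q : ℝ) ^ m) • ν) + -l'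
        = ((Q : ℝ) ^ m) • (((P : ℝ) ^ i) • lam) - ((Q : ℝ) ^ m) • ν - l' by abel] at h5
  -- conclude using the iteration identity with exponent m
  have hclQ : ∀ l ∈ Λ, (Q : ℝ) • l ∈ Λ := by
    intro l hl
    have := lattice_int_smul hΛ Q 1 hl
    simpa using this
  have hμ' : ((Q : ℝ) ^ (K - m)) • μ ∈ Λ := lattice_int_smul hΛ Q (K - m) hμ
  have hid := iterate_id hQr0 hfQ hclQ m (z + l') (((Q : ℝ) ^ (K - m)) • μ) hμ'
  rw [show ((Q : ℝ) ^ m) • (((Q : ℝ) ^ (K - m)) • μ) = ((Q : ℝ) ^ K) • μ by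
    rw [smul_smul, ← pow_add, Nat.add_sub_cancel' hmK]] at hid
  rw [← hy₁] at hid
  have k1 := key (((Q : ℝ) ^ (K - m)) • μ) ((hmem _).mp hμ')
  have k2 := key 0 (zero_mem L)
  rw [add_zero] at k2
  rw [k1, k2] at hid
  linarith [hid]

end MainLemma

section Final

open Filter Function Metric Submodule Set

theorem MultIndep.symm' {P Q : ℤ} (h : MultIndep P Q) : MultIndep Q P := by
  intro a b hab
  obtain ⟨h1, h2⟩ := h b a hab.symm
  exact ⟨h2, h1⟩

/-- **Proposition (non-torsion points).** If `P, Q > 1` are multiplicatively independent,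
`f` is discretely supported and `f_P`, `f_Q` are `Λ`-periodic, then there is a lattice
`Λ' ⊆ Λ` such that `f(z + λ) = f(z)` for all `z ∉ ℚΛ` and `λ ∈ Λ'`.  If moreover
`gcd(P, Q) = 1`, one may take `Λ' = Λ`. -/
theorem periodicity_off_rational_points
    (V : Type*) [NormedAddCommGroup V] [NormedSpace ℝ V] [FiniteDimensional ℝ V]
    (Λ : Set V) (hΛ : IsLattice V Λ)
    (P Q : ℤ) (hP : 1 < P) (hQ : 1 < Q) (hPQ : MultIndep P Q)
    (f : V → ℝ) (hf : DiscretelySupported f)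
    (hfP : IsPeriodic Λ (fun x => f ((P : ℝ) • x) - f x))
    (hfQ : IsPeriodic Λ (fun x => f ((Q : ℝ) • x) - f x)) :
    (∃ Λ' : Set V, IsLattice V Λ' ∧ Λ' ⊆ Λ ∧
      ∀ z : V, z ∉ ratSpan Λ → ∀ l ∈ Λ', f (z + l) = f z) ∧
    (IsCoprime P Q → ∀ z : V, z ∉ ratSpan Λ → ∀ l ∈ Λ, f (z + l) = f z) := by
  obtain ⟨b, hΛb⟩ := hΛ
  set L : Submodule ℤ V := Submodule.span ℤ (Set.range ⇑b) with hL
  have hΛb' : Λ = (L : Set V) := hΛb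
  have hQr0 : ((Q : ℝ)) ≠ 0 := by
    have : (1 : ℝ) < (Q : ℝ) := by exact_mod_cast hQ
    exact (lt_trans zero_lt_one this).ne'
  obtain ⟨M₁, hM₁⟩ := main_period Λ b hΛb' P Q hP hQ hPQ f hf hfP hfQ
  obtain ⟨M₂, hM₂⟩ := main_period Λ b hΛb' Q P hQ hP hPQ.symm' f hf hfQ hfP
  have hWr : Wq L ⊆ ratSpan Λ := Wq_subset_ratSpan hΛb'
  have hzero : (0 : V) ∈ Λ := by rw [hΛb']; exact L.zero_mem
  constructor
  · -- the sublattice (Q^M₁) • Λ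
    have hc0 : ((Q : ℝ) ^ M₁) ≠ 0 := pow_ne_zero _ hQr0
    set e : V ≃ₗ[ℝ] V := LinearEquiv.smulOfNeZero ℝ V ((Q : ℝ) ^ M₁) hc0 with he
    refine ⟨(fun v => ((Q : ℝ) ^ M₁) • v) '' Λ, ⟨b.map e, ?_⟩, ?_, ?_⟩
    · -- set equality with the span of the scaled basis
      have h1 : Set.range ⇑(b.map e) = ⇑e '' Set.range ⇑b := by
        rw [show ⇑(b.map e) = ⇑e ∘ ⇑b from funext fun i => b.map_apply e i]
        exact Set.range_comp _ _
      have h2 : Submodule.span ℤ (⇑e '' Set.range ⇑b)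
          = Submodule.map (e.toLinearMap.restrictScalars ℤ) L := by
        rw [hL, Submodule.map_span]
        rfl
      rw [h1, h2]
      rw [hΛb']
      ext x
      simp only [Submodule.map_coe, Set.mem_image]
      constructor
      · rintro ⟨v, hv, rfl⟩
        exact ⟨v, hv, rfl⟩
      · rintro ⟨v, hv, rfl⟩
        exact ⟨v, hv, rfl⟩
    · rintro x ⟨v, hv, rfl⟩
      exact lattice_int_smul hΛb' Q M₁ hv
    · rintro z hz l ⟨μ, hμ, rfl⟩
      have h := hM₁ z (fun h => hz (hWr h)) 0 hzero μ hμ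
      rwa [add_zero] at h
  · intro hco z hz l hl
    have hz' : z ∉ Wq L := fun h => hz (hWr h)
    obtain ⟨a, b', hab⟩ := (hco.pow : IsCoprime (P ^ M₂) (Q ^ M₁))
    have hl1 : ((a * P ^ M₂ : ℤ) : ℝ) • l ∈ Λ := by
      rw [hΛb'] at hl ⊢
      rw [Int.cast_smul_eq_zsmul]
      exact L.smul_mem _ hl
    have hl2 : ((b' : ℤ) : ℝ) • l ∈ Λ := by
      rw [hΛb'] at hl ⊢
      rw [Int.cast_smul_eq_zsmul]
      exact L.smul_mem _ hl
    have hl3 : ((a : ℤ) : ℝ) • l ∈ Λ := by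
      rw [hΛb'] at hl ⊢
      rw [Int.cast_smul_eq_zsmul]
      exact L.smul_mem _ hl
    have hsplit : z + l = (z + ((a * P ^ M₂ : ℤ) : ℝ) • l)
        + ((Q : ℝ) ^ M₁) • (((b' : ℤ) : ℝ) • l) := by
      have e1 : ((Q : ℝ) ^ M₁) • (((b' : ℤ) : ℝ) • l) = ((b' * Q ^ M₁ : ℤ) : ℝ) • l := by
        rw [smul_smul]
        congr 1
        push_cast
        ring
      rw [e1, add_assoc, ← add_smul]
      have e2 : ((a * P ^ M₂ : ℤ) : ℝ) + ((b' * Q ^ M₁ : ℤ) : ℝ) = 1 := by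
        rw [← Int.cast_add]
        rw [show a * P ^ M₂ + b' * Q ^ M₁ = 1 from hab]
        exact Int.cast_one
      rw [e2, one_smul]
    rw [hsplit]
    rw [hM₁ z hz' (((a * P ^ M₂ : ℤ) : ℝ) • l) hl1 (((b' : ℤ) : ℝ) • l) hl2]
    have hsplit2 : z + ((a * P ^ M₂ : ℤ) : ℝ) • l
        = z + 0 + ((P : ℝ) ^ M₂) • (((a : ℤ) : ℝ) • l) := by
      rw [add_zero, smul_smul]
      congr 1
      push_cast
      ring
    rw [hsplit2]
    rw [hM₂ z hz' 0 hzero (((a : ℤ) : ℝ) • l) hl3]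
    rw [add_zero]

end Final
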